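/- A nontrivial identity u ≈ v over the two-letter alphabet of variables {x, y} is satisfied by the hypoplactic monoid hypo if and only if it is balanced and neither u nor v is of the form x^a y^b or y^b x^a for some natural numbers a, b. -/

import Mathlib

open FreeMonoid

/-- The alphabet `A = {1 < 2 < 3 < ...}` of positive integers. -/
abbrev Alph : Type := ℕ+

/-- The finite alphabet `A_n = {1 < ... < n}`. -/
abbrev AlphN (n : ℕ) : Type := {a : ℕ+ // (a : ℕ) ≤ n}

/-- The defining relations of the hypoplactic monoid. -/
def HypoRel (u v : FreeMonoid Alph) : Prop :=
  (∃ a b c : Alph, a ≤ b ∧ b < c ∧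
      u = of a * of c * of b ∧ v = of c * of a * of b) ∨
  (∃ a b c : Alph, a < b ∧ b ≤ c ∧
      u = of b * of a * of c ∧ v = of b * of c * of a) ∨
  (∃ a b c d : Alph, a ≤ b ∧ b < c ∧ c ≤ d ∧
      u = of c * of a * of d * of b ∧ v = of a * of c * of b * of d) ∨
  (∃ a b c d : Alph, a < b ∧ b ≤ c ∧ c < d ∧
      u = of b * of d * of a * of c ∧ v = of d * of b * of c * of a)

/-- The hypoplactic congruence on `A*`: the congruence generated by `HypoRel`. -/
def hypoCon : Con (FreeMonoid Alph) := conGen HypoRel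

/-- The infinite-rank hypoplactic monoid `hypo`. -/
abbrev Hypo : Type := hypoCon.Quotient

/-- The inclusion of `A_n*` into `A*`. -/
def inclN (n : ℕ) : FreeMonoid (AlphN n) →* FreeMonoid Alph :=
  FreeMonoid.map Subtype.val

/-- The hypoplactic congruence restricted to `A_n*`. -/
def hypoConN (n : ℕ) : Con (FreeMonoid (AlphN n)) :=
  hypoCon.comap (inclN n) (fun x y => map_mul (inclN n) x y)

/-- The rank-`n` hypoplactic monoid `hypo_n`. -/
abbrev HypoN (n : ℕ) : Type := (hypoConN n).Quotient

/-- The letter `1` of `A_2`. -/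
def a1 : AlphN 2 := ⟨1, by norm_num⟩

/-- The letter `2` of `A_2`. -/
def a2 : AlphN 2 := ⟨2, by norm_num⟩

/-- The homomorphism `φ_{ij} : A* → hypo_2`, sending `i ↦ [1]`, `j ↦ [2]`,
`a ↦ [21]` for `i < a < j`, and every other letter to the identity. -/
def phi (i j : Alph) : FreeMonoid Alph →* HypoN 2 :=
  FreeMonoid.lift fun a =>
    if a = i then (hypoConN 2).mk' (of a1)
    else if a = j then (hypoConN 2).mk' (of a2)
    else if i < a ∧ a < j then (hypoConN 2).mk' (of a2 * of a1)
    else 1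

/-- A monoid `M` satisfies the identity `u ≈ v` (over the alphabet of variables `X`)
if every homomorphic evaluation of the two words in `M` gives equal values. -/
def MSatisfies (M : Type*) [Monoid M] {X : Type*} (u v : FreeMonoid X) : Prop :=
  ∀ ψ : FreeMonoid X →* M, ψ u = ψ v

/-- An identity `u ≈ v` is balanced if every variable occurs the same number of
times in `u` as in `v`. -/
def IsBalanced {X : Type*} [DecidableEq X] (u v : FreeMonoid X) : Prop :=
  ∀ x : X, u.toList.count x = v.toList.count x


namespace HP
abbrev W := List Alph
def HC (a b : W) : Prop := hypoCon (ofList a) (ofList b)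
theorem HC.refl (a : W) : HC a a := hypoCon.refl _
theorem HC.rfl' {a b : W} (h : a = b) : HC a b := h ▸ HC.refl a
theorem HC.symm {a b : W} (h : HC a b) : HC b a := hypoCon.symm h
theorem HC.trans {a b c : W} (h1 : HC a b) (h2 : HC b c) : HC a c := hypoCon.trans h1 h2
theorem HC.append {a b c d : W} (h1 : HC a b) (h2 : HC c d) : HC (a ++ c) (b ++ d) := by
  have := hypoCon.mul h1 h2
  simpa [HC, ofList_append] using this
theorem HC.appL (c : W) {a b : W} (h : HC a b) : HC (c ++ a) (c ++ b) := (HC.refl c).append h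
theorem HC.appR {a b : W} (h : HC a b) (c : W) : HC (a ++ c) (b ++ c) := h.append (HC.refl c)
theorem HC.ctx (s t : W) {a b : W} (h : HC a b) : HC (s ++ a ++ t) (s ++ b ++ t) := by
  have := (h.appR t).appL s
  simpa [List.append_assoc] using this
theorem HC.of {a b : W} (h : HypoRel (ofList a) (ofList b)) : HC a b := ConGen.Rel.of _ _ h
theorem m1 {a b c : Alph} (h1 : a ≤ b) (h2 : b < c) : HC [a,c,b] [c,a,b] :=
  HC.of (Or.inl ⟨a,b,c,h1,h2,rfl,rfl⟩)
theorem m2 {a b c : Alph} (h1 : a < b) (h2 : b ≤ c) : HC [b,a,c] [b,c,a] :=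
  HC.of (Or.inr (Or.inl ⟨a,b,c,h1,h2,rfl,rfl⟩))
theorem m3 {a b c d : Alph} (h1 : a ≤ b) (h2 : b < c) (h3 : c ≤ d) :
    HC [c,a,d,b] [a,c,b,d] :=
  HC.of (Or.inr (Or.inr (Or.inl ⟨a,b,c,d,h1,h2,h3,rfl,rfl⟩)))
theorem m4 {a b c d : Alph} (h1 : a < b) (h2 : b ≤ c) (h3 : c < d) :
    HC [b,d,a,c] [d,b,c,a] :=
  HC.of (Or.inr (Or.inr (Or.inr ⟨a,b,c,d,h1,h2,h3,rfl,rfl⟩)))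

theorem split_lt (u : W) (γ : Alph) :
    ∃ P Q, u = P ++ Q ∧ (∀ a ∈ P, a < γ) ∧ ∀ q Q', Q = q :: Q' → γ ≤ q := by
  induction u with
  | nil => exact ⟨[], [], rfl, by simp, by simp⟩
  | cons a u ih =>
    rcases le_or_gt γ a with h | h
    · refine ⟨[], a :: u, rfl, by simp, ?_⟩
      intro q Q' hq
      injection hq with h1 _
      exact h1 ▸ h
    · obtain ⟨P, Q, h1, h2, h3⟩ := ih
      refine ⟨a :: P, Q, by simp [h1], ?_, h3⟩
      intro b hb
      rcases List.mem_cons.1 hb with rfl | hb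
      · exact h
      · exact h2 b hb

/-- The key jump lemma: `y u z ≡ y z u` when all letters of `u` are `< y ≤ z`. -/
theorem jlemAux : ∀ (n : ℕ) (u : W) (y z : Alph), u.length ≤ n → (∀ a ∈ u, a < y) → y ≤ z →
    HC (y :: u ++ [z]) (y :: z :: u) := by
  intro n
  induction n with
  | zero =>
    intro u y z hn _ _
    have : u = [] := List.length_eq_zero_iff.1 (Nat.le_zero.1 hn)
    subst this; exact HC.refl _
  | succ n ih =>
    rintro (_ | ⟨γ, u'⟩) y z hn hu hyz
    · exact HC.refl _
    have hγ : γ < y := hu γ (by simp)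
    have hu' : ∀ a ∈ u', a < y := fun a ha => hu a (by simp [ha])
    have hlen : u'.length ≤ n := by simpa using hn
    obtain ⟨P, Q, hPQ, hP, hQbig⟩ := split_lt u' γ
    have hPy : ∀ a ∈ P, a < y := fun a ha => hu' a (by rw [hPQ]; simp [ha])
    have hPlen : P.length ≤ n := le_trans (by rw [hPQ, List.length_append]; omega) hlen
    match Q, hQbig with
    | [], _ =>
      have hu'γ : ∀ a ∈ u', a < γ := by rw [hPQ]; simpa using hP
      have step1' : HC (y :: (γ :: u' ++ [z])) (y :: (γ :: z :: u')) := by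
        have := (ih u' γ z hlen hu'γ (le_of_lt (lt_of_lt_of_le hγ hyz))).appL [y]
        simpa using this
      have step2 : HC ([y,γ,z] ++ u') ([y,z,γ] ++ u') := (m2 hγ hyz).appR u'
      refine HC.trans (HC.rfl' (by simp)) (step1'.trans ?_)
      refine HC.trans (HC.rfl' (by simp)) (step2.trans (HC.rfl' (by simp)))
    | q :: Q', hQbig =>
      have hγq : γ ≤ q := hQbig q Q' rfl
      have hqmem : q ∈ u' := by rw [hPQ]; simp
      have hqy : q < y := hu' q hqmem
      have hqz : q < z := lt_of_lt_of_le hqy hyz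
      have hQ'y : ∀ a ∈ Q', a < y := fun a ha => hu' a (by rw [hPQ]; simp [ha])
      have hlen2 : (q :: (P ++ Q')).length ≤ n := by
        have h5 : u'.length = P.length + (1 + Q'.length) := by
          rw [hPQ, List.length_append, List.length_cons]; omega
        rw [List.length_cons, List.length_append]; omega
      -- s1 : jump q over P (inner, context [y] _ (Q'++[z]))
      have s1 : HC ([y] ++ (γ :: P ++ [q]) ++ (Q' ++ [z])) ([y] ++ (γ :: q :: P) ++ (Q' ++ [z])) :=
        (ih P γ q hPlen hP hγq).ctx [y] (Q' ++ [z])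
      have s2 : HC ([] ++ [y,γ,q] ++ (P ++ Q' ++ [z])) ([] ++ [γ,y,q] ++ (P ++ Q' ++ [z])) :=
        ((m1 hγq hqy).symm).ctx [] (P ++ Q' ++ [z])
      have s3 : HC ([γ] ++ (y :: (q :: (P ++ Q')) ++ [z]) ++ []) ([γ] ++ (y :: z :: q :: (P ++ Q')) ++ []) := by
        refine HC.ctx [γ] [] ?_
        refine ih (q :: (P ++ Q')) y z hlen2 ?_ hyz
        intro a ha
        rcases List.mem_cons.1 ha with rfl | h
        · exact hqy
        · rcases List.mem_append.1 h with h | h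
          · exact hPy a h
          · exact hQ'y a h
      have s4 : HC ([γ] ++ [y,z,q] ++ (P ++ Q')) ([γ] ++ [y,q,z] ++ (P ++ Q')) :=
        ((m2 hqy hyz).symm).ctx [γ] (P ++ Q')
      have s5 : HC ([] ++ [γ,y,q,z] ++ (P ++ Q')) ([] ++ [y,γ,z,q] ++ (P ++ Q')) :=
        ((m3 hγq hqy hyz).symm).ctx [] (P ++ Q')
      have s6 : HC ([y] ++ [γ,z,q] ++ (P ++ Q')) ([y] ++ [z,γ,q] ++ (P ++ Q')) :=
        (m1 hγq hqz).ctx [y] (P ++ Q')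
      have s7 : HC ([y,z] ++ (γ :: q :: P) ++ Q') ([y,z] ++ (γ :: P ++ [q]) ++ Q') :=
        ((ih P γ q hPlen hP hγq).symm).ctx [y,z] Q'
      refine HC.trans (HC.rfl' (by rw [hPQ]; simp)) (s1.trans ?_)
      refine HC.trans (HC.rfl' (by simp)) (s2.trans ?_)
      refine HC.trans (HC.rfl' (by simp)) (s3.trans ?_)
      refine HC.trans (HC.rfl' (by simp)) (s4.trans ?_)
      refine HC.trans (HC.rfl' (by simp)) (s5.trans ?_)
      refine HC.trans (HC.rfl' (by simp)) (s6.trans ?_)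
      refine HC.trans (HC.rfl' (by simp)) (s7.trans ?_)
      refine HC.rfl' (by rw [hPQ]; simp)

theorem jlem (u : W) (y z : Alph) (hu : ∀ a ∈ u, a < y) (hyz : y ≤ z) :
    HC (y :: u ++ [z]) (y :: z :: u) := jlemAux u.length u y z le_rfl hu hyz


abbrev rep (m : ℕ) (x : Alph) : W := List.replicate m x

theorem rep_succ (m : ℕ) (x : Alph) : rep (m+1) x = x :: rep m x := rfl

/-- The block absorbs a word `u < x` lying between its head `x` and the remaining block. -/
theorem absorbR (x : Alph) (u : W) (hu : ∀ a ∈ u, a < x) :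
    ∀ (k : ℕ) (T : W), HC (x :: u ++ (rep k x ++ T)) (rep (k+1) x ++ (u ++ T)) := by
  intro k
  induction k with
  | zero => intro T; exact HC.rfl' (by simp [rep])
  | succ k ih =>
    intro T
    have s1 : HC ((x :: u ++ [x]) ++ (rep k x ++ T)) ((x :: x :: u) ++ (rep k x ++ T)) :=
      (jlem u x x hu le_rfl).appR _
    refine HC.trans (HC.rfl' (by simp [rep_succ])) (s1.trans ?_)
    have s2 := (ih T).appL [x]
    refine HC.trans (HC.rfl' (by simp)) (s2.trans (HC.rfl' (by simp [rep_succ])))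

/-- A letter `γ < x` just right of the block hops to the second position of the block. -/
theorem hopIn (x γ : Alph) (hγ : γ < x) :
    ∀ (k : ℕ) (T : W), HC (rep (k+1) x ++ (γ :: T)) (x :: γ :: (rep k x ++ T)) := by
  intro k
  induction k with
  | zero => intro T; exact HC.rfl' (by simp [rep])
  | succ k ih =>
    intro T
    have s1 : HC (x :: (rep (k+1) x ++ (γ :: T))) (x :: (x :: γ :: (rep k x ++ T)))
      := (ih T).appL [x]
    refine HC.trans (HC.rfl' (by simp [rep_succ])) (s1.trans ?_)
    have s2 : HC ([] ++ [x,x,γ] ++ (rep k x ++ T)) ([] ++ [x,γ,x] ++ (rep k x ++ T)) :=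
      ((jlem [γ] x x (by simpa using hγ) le_rfl).symm).ctx [] (rep k x ++ T)
    refine HC.trans (HC.rfl' (by simp)) (s2.trans (HC.rfl' (by simp [rep_succ])))

/-- A letter `γ < c` exits the block completely to the left, under a dominator `c`. -/
theorem exitL (x γ c : Alph) (hγc : γ < c) (hcx : c ≤ x) :
    ∀ (k : ℕ) (T : W), HC (c :: rep (k+1) x ++ (γ :: T)) (c :: γ :: (rep (k+1) x ++ T)) := by
  intro k T
  have hγx : γ < x := lt_of_lt_of_le hγc hcx
  have s1 := (hopIn x γ hγx k T).appL [c]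
  refine HC.trans (HC.rfl' (by simp)) (s1.trans ?_)
  have s2 : HC ([] ++ [c,x,γ] ++ (rep k x ++ T)) ([] ++ [c,γ,x] ++ (rep k x ++ T)) :=
    ((m2 hγc hcx).symm).ctx [] (rep k x ++ T)
  refine HC.trans (HC.rfl' (by simp)) (s2.trans (HC.rfl' (by simp [rep_succ])))

/-- All but the first `x` of the block jump right over a word `B < x`. -/
theorem splitR (x : Alph) (B : W) (hB : ∀ a ∈ B, a < x) :
    ∀ (k : ℕ) (T : W), HC (rep (k+1) x ++ (B ++ T)) (x :: B ++ (rep k x ++ T)) := by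
  intro k
  induction k with
  | zero => intro T; exact HC.rfl' (by simp [rep])
  | succ k ih =>
    intro T
    have s1 : HC (x :: (rep (k+1) x ++ (B ++ T))) (x :: (x :: B ++ (rep k x ++ T))) :=
      (ih T).appL [x]
    refine HC.trans (HC.rfl' (by simp [rep_succ])) (s1.trans ?_)
    have s2 : HC ([] ++ (x :: x :: B) ++ (rep k x ++ T)) ([] ++ (x :: B ++ [x]) ++ (rep k x ++ T)) :=
      ((jlem B x x hB le_rfl).symm).ctx [] (rep k x ++ T)
    refine HC.trans (HC.rfl' (by simp)) (s2.trans (HC.rfl' (by simp [rep_succ])))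

/-- The block moves right over `B`, under a dominator `l` with only `u < l` between. -/
theorem rxlem (x l : Alph) (u B : W) (hu : ∀ a ∈ u, a < l) (hB : ∀ a ∈ B, a < l)
    (hlx : l ≤ x) (k : ℕ) (T : W) :
    HC (l :: u ++ (rep (k+1) x ++ (B ++ T))) (l :: u ++ (B ++ (rep (k+1) x ++ T))) := by
  have hBx : ∀ a ∈ B, a < x := fun a ha => lt_of_lt_of_le (hB a ha) hlx
  have s1 := (splitR x B hBx k T).appL (l :: u)
  refine HC.trans (HC.rfl' (by simp)) (s1.trans ?_)
  have s2 : HC ((l :: u ++ [x]) ++ (B ++ (rep k x ++ T))) ((l :: x :: u) ++ (B ++ (rep k x ++ T))) :=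
    (jlem u l x hu hlx).appR _
  refine HC.trans (HC.rfl' (by simp)) (s2.trans ?_)
  have s3 : HC ((l :: x :: (u ++ B)) ++ (rep k x ++ T)) ((l :: (u ++ B) ++ [x]) ++ (rep k x ++ T)) := by
    refine HC.appR ?_ _
    refine (jlem (u ++ B) l x ?_ hlx).symm
    intro a ha
    rcases List.mem_append.1 ha with h | h
    · exact hu a h
    · exact hB a h
  refine HC.trans (HC.rfl' (by simp)) (s3.trans (HC.rfl' (by simp [rep_succ])))

/-- A letter `p` crosses the whole block rightward, with adjacent witness `c ∈ [p,x)`. -/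
theorem crossL (x p c : Alph) (hpc : p ≤ c) (hcx : c < x) (k : ℕ) (T : W) :
    HC (p :: rep (k+1) x ++ (c :: T)) (rep (k+1) x ++ (p :: c :: T)) := by
  have s1 := (hopIn x c hcx k T).appL [p]
  refine HC.trans (HC.rfl' (by simp)) (s1.trans ?_)
  have s2 : HC ([] ++ [p,x,c] ++ (rep k x ++ T)) ([] ++ [x,p,c] ++ (rep k x ++ T)) :=
    (m1 hpc hcx).ctx [] (rep k x ++ T)
  refine HC.trans (HC.rfl' (by simp)) (s2.trans ?_)
  have s3 := absorbR x [p,c] (by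
    intro a ha
    have h2 : a = p ∨ a = c := by simpa using ha
    rcases h2 with rfl | rfl
    · exact lt_of_le_of_lt hpc hcx
    · exact hcx) k T
  refine HC.trans (HC.rfl' (by simp)) (s3.trans (HC.rfl' (by simp)))

/-- The core crossing: `c x p q ≡ x c p q` (M4 then M2). -/
theorem gl2core (x p c q : Alph) (hpc : p < c) (hcq : c ≤ q) (hqx : q < x) (T : W) :
    HC (c :: x :: p :: q :: T) (x :: c :: p :: q :: T) := by
  have s1 : HC ([] ++ [c,x,p,q] ++ T) ([] ++ [x,c,q,p] ++ T) :=
    (m4 hpc hcq hqx).ctx [] T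
  have s2 : HC ([x] ++ [c,q,p] ++ T) ([x] ++ [c,p,q] ++ T) :=
    ((m2 hpc hcq).symm).ctx [x] T
  refine HC.trans (HC.rfl' (by simp)) (s1.trans ?_)
  refine HC.trans (HC.rfl' (by simp)) (s2.trans (HC.rfl' (by simp)))

/-- Sandwich lemma: `c p x^m (V q T) ≡ x^m c p (V q T)` for an ascending chain `p :: V < c ≤ q < x`. -/
theorem sndlem (x c q : Alph) (hcq : c ≤ q) (hqx : q < x) :
    ∀ (V : W) (p : Alph), List.Chain' (· ≤ ·) (p :: V) → (∀ a ∈ p :: V, a < c) →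
    ∀ (k : ℕ) (T : W),
      HC (c :: p :: (rep (k+1) x ++ (V ++ q :: T)))
         (rep (k+1) x ++ (c :: p :: (V ++ q :: T))) := by
  intro V
  have hcx : c < x := lt_of_le_of_lt hcq hqx
  induction V with
  | nil =>
    intro p _ hps k T
    have hpc : p < c := hps p (by simp)
    have s1 := (hopIn x q hqx k T).appL [c, p]
    refine HC.trans (HC.rfl' (by simp)) (s1.trans ?_)
    have s2 : HC ([c] ++ [p,x,q] ++ (rep k x ++ T)) ([c] ++ [x,p,q] ++ (rep k x ++ T)) :=
      (m1 (le_of_lt (lt_of_lt_of_le hpc hcq)) hqx).ctx [c] (rep k x ++ T)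
    refine HC.trans (HC.rfl' (by simp)) (s2.trans ?_)
    have s3 := gl2core x p c q hpc hcq hqx (rep k x ++ T)
    refine HC.trans (HC.rfl' (by simp)) (s3.trans ?_)
    have s4 := absorbR x [c,p,q] (by
      intro a ha
      have h2 : a = c ∨ a = p ∨ a = q := by simpa using ha
      rcases h2 with rfl | rfl | rfl
      · exact hcx
      · exact lt_trans hpc hcx
      · exact hqx) k T
    refine HC.trans (HC.rfl' (by simp)) (s4.trans (HC.rfl' (by simp)))
  | cons w V ih =>
    intro p hchain hps k T
    have hpc : p < c := hps p (by simp)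
    have hwc : w < c := hps w (by simp)
    have hpw : p ≤ w := (List.isChain_cons_cons.1 hchain).1
    have hwx : w < x := lt_trans hwc hcx
    have s1 := (hopIn x w hwx k (V ++ q :: T)).appL [c, p]
    refine HC.trans (HC.rfl' (by simp)) (s1.trans ?_)
    have s2 : HC ([] ++ [c,p,x,w] ++ (rep k x ++ (V ++ q :: T)))
               ([] ++ [p,c,w,x] ++ (rep k x ++ (V ++ q :: T))) :=
      (m3 hpw hwc (le_of_lt hcx)).ctx [] _
    refine HC.trans (HC.rfl' (by simp)) (s2.trans ?_)
    have s3 : HC ([p] ++ (c :: w :: (rep (k+1) x ++ (V ++ q :: T))))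
               ([p] ++ (rep (k+1) x ++ (c :: w :: (V ++ q :: T)))) := by
      refine HC.appL [p] ?_
      refine ih w (List.isChain_cons_cons.1 hchain).2 ?_ k T
      intro a ha
      exact hps a (by simpa using Or.inr (by simpa using ha))
    refine HC.trans (HC.rfl' (by simp [rep_succ])) (s3.trans ?_)
    have s4 := crossL x p c (le_of_lt hpc) hcx k (w :: V ++ q :: T)
    refine HC.trans (HC.rfl' (by simp)) (s4.trans ?_)
    have s5 : HC (rep (k+1) x ++ [p,c,w] ++ (V ++ q :: T))
               (rep (k+1) x ++ [c,p,w] ++ (V ++ q :: T)) :=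
      (m1 hpw hwc).ctx (rep (k+1) x) (V ++ q :: T)
    refine HC.trans (HC.rfl' (by simp)) (s5.trans (HC.rfl' (by simp)))

/-- Rail for ascending `P`. -/
theorem ascrail (x c q : Alph) (hcq : c ≤ q) (hqx : q < x) (P : W)
    (hasc : List.Chain' (· ≤ ·) P) (hP : ∀ a ∈ P, a < c) (k : ℕ) (T : W) :
    HC (c :: (rep (k+1) x ++ (P ++ q :: T)))
       (rep (k+1) x ++ (c :: (P ++ q :: T))) := by
  have hcx : c < x := lt_of_le_of_lt hcq hqx
  match P, hasc, hP with
  | [], _, _ =>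
    have s1 := (hopIn x q hqx k T).appL [c]
    refine HC.trans (HC.rfl' (by simp)) (s1.trans ?_)
    have s2 : HC ([] ++ [c,x,q] ++ (rep k x ++ T)) ([] ++ [x,c,q] ++ (rep k x ++ T)) :=
      (m1 hcq hqx).ctx [] _
    refine HC.trans (HC.rfl' (by simp)) (s2.trans ?_)
    have s3 := absorbR x [c,q] (by
      intro a ha
      have h2 : a = c ∨ a = q := by simpa using ha
      rcases h2 with rfl | rfl
      · exact hcx
      · exact hqx) k T
    refine HC.trans (HC.rfl' (by simp)) (s3.trans (HC.rfl' (by simp)))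
  | p :: V, hasc, hP =>
    have hpc : p < c := hP p (by simp)
    have s1 := exitL x p c hpc (le_of_lt hcx) k (V ++ q :: T)
    refine HC.trans (HC.rfl' (by simp)) (s1.trans ?_)
    have s2 := sndlem x c q hcq hqx V p hasc hP k T
    refine HC.trans (HC.rfl' (by simp)) (s2.trans (HC.rfl' (by simp)))

theorem asc_or_split (P : W) : List.Chain' (· ≤ ·) P ∨
    ∃ P₁ a s S', P = P₁ ++ a :: s :: S' ∧ s < a ∧ List.Chain' (· ≤ ·) (s :: S') := by
  induction P with
  | nil => left; exact List.isChain_nil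
  | cons p P ih =>
    rcases ih with hasc | ⟨P₁, a, s, S', hsplit, hlt, hchain⟩
    · match P, hasc with
      | [], _ => left; exact List.isChain_singleton _
      | w :: P', hasc =>
        rcases le_or_gt p w with h | h
        · left; exact List.isChain_cons_cons.2 ⟨h, hasc⟩
        · right; exact ⟨[], p, w, P', rfl, h, hasc⟩
    · right; exact ⟨p :: P₁, a, s, S', by simp [hsplit], hlt, hchain⟩

/-- The teleport step: handles `P = P₁ ++ a :: S` with descent into ascending `S`. -/
theorem railSplit : ∀ (g : ℕ) (S : W), S.length ≤ g →
    ∀ (L : ℕ) (P₁ : W) (a c q x : Alph) (Q : W) (k : ℕ),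
    P₁.length + 1 + S.length ≤ L →
    (∀ b ∈ P₁, b < c) → a < c → (∀ b ∈ S, b < c) → List.Chain' (· ≤ ·) S →
    (∃ s S', S = s :: S' ∧ s < a) → c ≤ q → q < x →
    (∀ (P' : W) (q' : Alph) (Q' : W), P'.length < L → (∀ b ∈ P', b < c) → c ≤ q' → q' < x →
      HC (c :: (rep (k+1) x ++ (P' ++ q' :: Q'))) (rep (k+1) x ++ (c :: (P' ++ q' :: Q')))) →
    HC (c :: (rep (k+1) x ++ ((P₁ ++ a :: S) ++ q :: Q)))
       (rep (k+1) x ++ (c :: ((P₁ ++ a :: S) ++ q :: Q))) := by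
  intro g
  induction g with
  | zero =>
    intro S hg
    have : S = [] := List.length_eq_zero_iff.1 (Nat.le_zero.1 hg)
    subst this
    rintro L P₁ a c q x Q k hL hP₁ hac hS hchain ⟨s, S', hss, _⟩ hcq hqx hrec
    cases hss
  | succ g ih =>
    rintro S hg L P₁ a c q x Q k hL hP₁ hac hS hchain ⟨s, S', rfl, hsa⟩ hcq hqx hrec
    obtain ⟨S₁, S₂, hSfull, hS₁a, hS₂⟩ := split_lt (s :: S') a
    have hS₁ne : S₁ ≠ [] := by
      intro h
      rw [h] at hSfull
      simp at hSfull
      exact absurd (hS₂ s S' hSfull.symm) (not_le.2 hsa)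
    match S₂, hS₂ with
    | [], _ =>
      -- full teleport: q jumps over S = S₁
      have hSeq : s :: S' = S₁ := by simpa using hSfull
      have haq : a ≤ q := le_of_lt (lt_of_lt_of_le hac hcq)
      have inner : HC (a :: S₁ ++ [q]) (a :: q :: S₁) := jlem S₁ a q hS₁a haq
      have t1 : HC ((c :: rep (k+1) x ++ P₁) ++ (a :: S₁ ++ [q]) ++ Q)
                 ((c :: rep (k+1) x ++ P₁) ++ (a :: q :: S₁) ++ Q) :=
        inner.ctx _ Q
      have t2 : HC (c :: (rep (k+1) x ++ ((P₁ ++ [a]) ++ q :: (S₁ ++ Q))))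
                 (rep (k+1) x ++ (c :: ((P₁ ++ [a]) ++ q :: (S₁ ++ Q)))) := by
        refine hrec (P₁ ++ [a]) q (S₁ ++ Q) ?_ ?_ hcq hqx
        · have h1 : P₁.length + 1 + (S'.length + 1) ≤ L := by simpa using hL
          simp only [List.length_append, List.length_cons, List.length_nil]
          omega
        · intro b hb
          rcases List.mem_append.1 hb with h | h
          · exact hP₁ b h
          · simp at h; exact h ▸ hac
      have t3 : HC ((rep (k+1) x ++ [c] ++ P₁) ++ (a :: q :: S₁) ++ Q)
                 ((rep (k+1) x ++ [c] ++ P₁) ++ (a :: S₁ ++ [q]) ++ Q) :=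
        inner.symm.ctx _ Q
      rw [← hSeq] at t1 t3
      refine HC.trans (HC.rfl' (by simp)) (t1.trans ?_)
      refine HC.trans (HC.rfl' (by rw [← hSeq]; simp)) (t2.trans ?_)
      refine HC.trans (HC.rfl' (by rw [← hSeq]; simp)) (t3.trans (HC.rfl' (by simp)))
    | M :: S₂', hS₂ =>
      -- mini teleport: M jumps over S₁
      have haM : a ≤ M := hS₂ M S₂' rfl
      have inner : HC (a :: S₁ ++ [M]) (a :: M :: S₁) := jlem S₁ a M hS₁a haM
      -- new S is S₁ ++ S₂', new a is M, new P₁ is P₁ ++ [a]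
      have hchain' : List.Chain' (· ≤ ·) (S₁ ++ M :: S₂') := hSfull ▸ hchain
      have hc1 := List.isChain_append.1 hchain'
      have hchainS₂' : List.Chain' (· ≤ ·) S₂' := (List.isChain_cons.1 hc1.2.1).2
      have hMS₂' : ∀ y ∈ S₂'.head?, M ≤ y := (List.isChain_cons.1 hc1.2.1).1
      have hchainNew : List.Chain' (· ≤ ·) (S₁ ++ S₂') := by
        refine List.isChain_append.2 ⟨hc1.1, hchainS₂', ?_⟩
        intro b hb y hy
        have hbS₁ : b ∈ S₁ := List.mem_of_mem_getLast? hb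
        have hba : b < a := hS₁a b hbS₁
        exact le_trans (le_of_lt (lt_of_lt_of_le hba haM)) (hMS₂' y hy)
      have hlen' : (S₁ ++ S₂').length ≤ g := by
        have h1 : (s :: S').length = S₁.length + (S₂'.length + 1) := by
          rw [hSfull]; simp
        simp at hg h1 ⊢
        omega
      have hSnew : ∀ b ∈ S₁ ++ S₂', b < c := by
        intro b hb
        refine hS b ?_
        rw [hSfull]
        rcases List.mem_append.1 hb with h | h
        · exact List.mem_append.2 (Or.inl h)
        · exact List.mem_append.2 (Or.inr (by simp [h]))
      have hexists : ∃ s₀ S₀, S₁ ++ S₂' = s₀ :: S₀ ∧ s₀ < M := by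
        match S₁, hS₁ne, hS₁a with
        | s₁ :: S₁', _, hS₁a =>
          exact ⟨s₁, S₁' ++ S₂', rfl, lt_of_lt_of_le (hS₁a s₁ (by simp)) haM⟩
      have hMc : M < c := hS M (by rw [hSfull]; simp)
      have hP₁' : ∀ b ∈ P₁ ++ [a], b < c := by
        intro b hb
        rcases List.mem_append.1 hb with h | h
        · exact hP₁ b h
        · simp at h; exact h ▸ hac
      have hLnew : (P₁ ++ [a]).length + 1 + (S₁ ++ S₂').length ≤ L := by
        have h1 : (s :: S').length = S₁.length + (S₂'.length + 1) := by rw [hSfull]; simp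
        simp at h1 hL ⊢
        omega
      have trec := ih (S₁ ++ S₂') hlen' L (P₁ ++ [a]) M c q x Q k hLnew hP₁' hMc hSnew
        hchainNew hexists hcq hqx hrec
      -- transfer
      have t1 : HC ((c :: rep (k+1) x ++ P₁) ++ (a :: S₁ ++ [M]) ++ (S₂' ++ q :: Q))
                 ((c :: rep (k+1) x ++ P₁) ++ (a :: M :: S₁) ++ (S₂' ++ q :: Q)) :=
        inner.ctx _ _
      have t3 : HC ((rep (k+1) x ++ [c] ++ P₁) ++ (a :: M :: S₁) ++ (S₂' ++ q :: Q))
                 ((rep (k+1) x ++ [c] ++ P₁) ++ (a :: S₁ ++ [M]) ++ (S₂' ++ q :: Q)) :=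
        inner.symm.ctx _ _
      refine HC.trans (HC.rfl' (by rw [hSfull]; simp)) (t1.trans ?_)
      refine HC.trans (HC.rfl' (by simp)) (trec.trans ?_)
      refine HC.trans (HC.rfl' (by simp)) (t3.trans (HC.rfl' (by rw [hSfull]; simp)))

/-- The full rail: a letter `c` crosses the block `x^m` leftwards, given a witness
`q ∈ [c,x)` later in the word, with only smaller letters in between. -/
theorem rail : ∀ (f : ℕ) (P : W), P.length ≤ f →
    ∀ (c q x : Alph) (Q : W) (k : ℕ),
    (∀ a ∈ P, a < c) → c ≤ q → q < x →
    HC (c :: (rep (k+1) x ++ (P ++ q :: Q)))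
       (rep (k+1) x ++ (c :: (P ++ q :: Q))) := by
  intro f
  induction f with
  | zero =>
    intro P hP c q x Q k hPc hcq hqx
    have : P = [] := List.length_eq_zero_iff.1 (Nat.le_zero.1 hP)
    subst this
    exact ascrail x c q hcq hqx [] List.isChain_nil (by simp) k Q
  | succ f ih =>
    intro P hP c q x Q k hPc hcq hqx
    rcases asc_or_split P with hasc | ⟨P₁, a, s, S', rfl, hlt, hchain⟩
    · exact ascrail x c q hcq hqx P hasc hPc k Q
    · refine railSplit (s :: S').length (s :: S') le_rfl (P₁ ++ a :: s :: S').length P₁ a c q x Q k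
        (by simp only [List.length_append, List.length_cons]; omega) ?_ ?_ ?_ hchain ⟨s, S', rfl, hlt⟩ hcq hqx ?_
      · intro b hb; exact hPc b (by simp [hb])
      · exact hPc a (by simp)
      · intro b hb; refine hPc b ?_; simp at hb ⊢; tauto
      · intro P' q' Q' hP'len hP'c hcq' hq'x
        refine ih P' ?_ c q' x Q' k hP'c hcq' hq'x
        simp at hP'len hP
        omega

/-- Block crosses a word `C` leftward given a witness `e ≥ max C` in `V`. -/
theorem bx (C : W) : ∀ (V : W) (x e : Alph) (k : ℕ),
    (∀ a ∈ C, a < x) → (∀ a ∈ V, a < x) → e ∈ V → (∀ a ∈ C, a ≤ e) →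
    HC (C ++ (rep (k+1) x ++ V)) (rep (k+1) x ++ (C ++ V)) := by
  induction C using List.reverseRecOn with
  | nil => intro V x e k _ _ _ _; exact HC.rfl' (by simp)
  | append_singleton C' c ih =>
    intro V x e k hC hV he hCe
    have hcx : c < x := hC c (by simp)
    have hce : c ≤ e := hCe c (by simp)
    obtain ⟨P, Q, hPQ, hP, hQ⟩ := split_lt V c
    have hQne : Q ≠ [] := by
      intro h
      rw [h, List.append_nil] at hPQ
      rw [hPQ] at he
      exact absurd (hP e he) (not_lt.2 hce)
    rcases Q with _ | ⟨q, Q'⟩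
    · exact absurd rfl hQne
    · have hcq : c ≤ q := hQ q Q' rfl
      have hqx : q < x := hV q (by rw [hPQ]; simp)
      have s1 : HC (C' ++ (c :: (rep (k+1) x ++ (P ++ q :: Q'))))
                 (C' ++ (rep (k+1) x ++ (c :: (P ++ q :: Q')))) :=
        (rail P.length P le_rfl c q x Q' k hP hcq hqx).appL C'
      have s2 : HC (C' ++ (rep (k+1) x ++ (c :: V))) (rep (k+1) x ++ (C' ++ (c :: V))) := by
        refine ih (c :: V) x e k ?_ ?_ (List.mem_cons_of_mem c he) ?_
        · intro a ha; exact hC a (by simp [ha])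
        · intro a ha
          rcases List.mem_cons.1 ha with rfl | ha
          · exact hcx
          · exact hV a ha
        · intro a ha; exact hCe a (by simp [ha])
      refine HC.trans (HC.rfl' (by rw [hPQ]; try simp)) (s1.trans ?_)
      refine HC.trans (HC.rfl' (by rw [hPQ]; try simp)) (s2.trans (HC.rfl' (by simp)))

theorem maxSplit : ∀ (L : W), L ≠ [] →
    ∃ A₁ l A₂, L = A₁ ++ l :: A₂ ∧ (∀ a ∈ A₂, a < l) ∧ (∀ a ∈ L, a ≤ l) := by
  intro L
  induction L with
  | nil => intro h; exact absurd rfl h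
  | cons a L ih =>
    intro _
    match L, ih with
    | [], _ => exact ⟨[], a, [], rfl, by simp, by simp⟩
    | b :: L', ih =>
      obtain ⟨A₁, l, A₂, h1, h2, h3⟩ := ih (by simp)
      rcases le_or_gt a l with h | h
      · refine ⟨a :: A₁, l, A₂, by simp [h1], h2, ?_⟩
        intro b' hb'
        rcases List.mem_cons.1 hb' with rfl | hb'
        · exact h
        · exact h3 b' hb'
      · refine ⟨[], a, b :: L', rfl, ?_, ?_⟩
        · intro b' hb'
          exact lt_of_le_of_lt (h3 b' hb') h
        · intro b' hb'
          rcases List.mem_cons.1 hb' with rfl | hb'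
          · exact le_refl _
          · exact le_of_lt (lt_of_le_of_lt (h3 b' hb') h)

theorem firstOcc {x : Alph} : ∀ {w : W}, x ∈ w → ∃ A R, w = A ++ x :: R ∧ x ∉ A := by
  intro w
  induction w with
  | nil => intro h; cases h
  | cons a w ih =>
    intro h
    by_cases hax : a = x
    · exact ⟨[], w, by rw [hax]; simp, by simp⟩
    · obtain ⟨A, R, h1, h2⟩ := ih (by
        rcases List.mem_cons.1 h with h | h
        · exact absurd h.symm hax
        · exact h)
      refine ⟨a :: A, R, by simp [h1], ?_⟩
      simp only [List.mem_cons, not_or]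
      exact ⟨fun h => hax h.symm, h2⟩

/-- Merge all occurrences of the maximal letter `x` into the leading block. -/
theorem mergeAux : ∀ (n : ℕ) (S : W), S.length ≤ n → ∀ (x : Alph) (k : ℕ),
    (∀ a ∈ S, a ≤ x) →
    HC (rep (k+1) x ++ S) (rep (k+1 + S.count x) x ++ S.filter (· ≠ x)) := by
  intro n
  induction n with
  | zero =>
    intro S hS x k _
    have : S = [] := List.length_eq_zero_iff.1 (Nat.le_zero.1 hS)
    subst this
    exact HC.rfl' (by simp)
  | succ n ih =>
    intro S hS x k hSx
    by_cases hx : x ∈ S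
    · obtain ⟨B, S₂, rfl, hB⟩ := firstOcc hx
      have hBx : ∀ a ∈ B, a < x := by
        intro a ha
        rcases lt_or_eq_of_le (hSx a (by simp [ha])) with h | h
        · exact h
        · exact absurd (h ▸ ha) hB
      have s1 : HC (rep k x ++ (x :: B ++ [x]) ++ S₂) (rep k x ++ (x :: x :: B) ++ S₂) :=
        (jlem B x x hBx le_rfl).ctx (rep k x) S₂
      have s2 : HC (rep (k+2) x ++ (B ++ S₂))
                 (rep (k+2 + (B ++ S₂).count x) x ++ (B ++ S₂).filter (· ≠ x)) := by
        refine ih (B ++ S₂) ?_ x (k+1) ?_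
        · have := hS
          simp only [List.length_append, List.length_cons] at this ⊢
          omega
        · intro a ha
          rcases List.mem_append.1 ha with h | h
          · exact hSx a (by simp [h])
          · exact hSx a (by simp [h])
      have hcnt : (B ++ x :: S₂).count x = (B ++ S₂).count x + 1 := by
        simp [List.count_append, List.count_cons]
        omega
      have hfil : (B ++ x :: S₂).filter (· ≠ x) = (B ++ S₂).filter (· ≠ x) := by
        simp [List.filter_append]
      have rep_succ' : ∀ (j : ℕ), rep (j+1) x = rep j x ++ [x] := fun j => List.replicate_succ'
      refine HC.trans (HC.rfl' ?_) (s1.trans ?_)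
      · rw [rep_succ']
        simp [List.append_assoc]
      refine HC.trans (HC.rfl' ?_) (s2.trans (HC.rfl' ?_))
      · rw [show k+2 = (k+1)+1 from rfl, rep_succ', rep_succ']
        simp [List.append_assoc]
      · rw [hcnt, hfil, show k+1+((B ++ S₂).count x + 1) = k+2+(B ++ S₂).count x by omega]
    · have hcnt : S.count x = 0 := List.count_eq_zero.2 hx
      have hfil : S.filter (· ≠ x) = S := by
        refine List.filter_eq_self.2 ?_
        intro a ha
        simp only [ne_eq, decide_eq_true_eq]
        intro h
        exact hx (h ▸ ha)
      rw [hcnt, hfil]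
      exact HC.rfl' (by norm_num)

/-- The peel-max normalization: `w` is congruent to the word with all copies of its
maximal letter `x` collected at the front or at the back. -/
theorem slemma (w : W) (x : Alph) (hx : ∀ a ∈ w, a ≤ x) (hxw : x ∈ w) :
    HC w (rep (w.count x) x ++ w.filter (· ≠ x)) ∨
    HC w (w.filter (· ≠ x) ++ rep (w.count x) x) := by
  obtain ⟨A₀, R, rfl, hA₀⟩ := firstOcc hxw
  have hA₀x : ∀ a ∈ A₀, a < x := by
    intro a ha
    rcases lt_or_eq_of_le (hx a (by simp [ha])) with h | h
    · exact h
    · exact absurd (h ▸ ha) hA₀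
  have hRx : ∀ a ∈ R, a ≤ x := fun a ha => hx a (by simp [ha])
  have hm : (A₀ ++ x :: R).count x = R.count x + 1 := by
    rw [List.count_append, List.count_eq_zero.2 hA₀, List.count_cons_self]
    omega
  have hfil : (A₀ ++ x :: R).filter (· ≠ x) = A₀ ++ R.filter (· ≠ x) := by
    have h1 : A₀.filter (· ≠ x) = A₀ := by
      refine List.filter_eq_self.2 ?_
      intro a ha
      simp only [ne_eq, decide_eq_true_eq]
      exact fun h => hA₀ (h ▸ ha)
    rw [List.filter_append, h1, List.filter_cons]
    simp
  set Abar := R.filter (· ≠ x) with hAbar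
  have hAbarx : ∀ a ∈ Abar, a < x := by
    intro a ha
    rw [hAbar] at ha
    have h1 := List.of_mem_filter ha
    have h2 := List.mem_of_mem_filter ha
    rcases lt_or_eq_of_le (hRx a h2) with h | h
    · exact h
    · simp [h] at h1
  have hmerge : HC (A₀ ++ x :: R) (A₀ ++ (rep (R.count x + 1) x ++ Abar)) := by
    have := (mergeAux R.length R le_rfl x 0 hRx).appL A₀
    refine HC.trans (HC.rfl' (by simp [rep])) (this.trans (HC.rfl' ?_))
    rw [hAbar]
    refine congrArg _ (congrArg (fun z => rep z x ++ _) ?_)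
    omega
  by_cases hwit : ∃ e ∈ Abar, ∀ a ∈ A₀, a ≤ e
  · -- left normal form
    left
    obtain ⟨e, he, hCe⟩ := hwit
    have s2 : HC (A₀ ++ (rep (R.count x + 1) x ++ Abar)) (rep (R.count x + 1) x ++ (A₀ ++ Abar)) :=
      bx A₀ Abar x e (R.count x) hA₀x hAbarx he hCe
    refine hmerge.trans (s2.trans (HC.rfl' ?_))
    rw [hm, hfil]
  · by_cases hA₀e : A₀ = []
    · left
      subst hA₀e
      refine hmerge.trans (HC.rfl' ?_)
      rw [hm, hfil]
      simp
    · right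
      obtain ⟨A₁, l, A₂, hsplit, hA₂, hle⟩ := maxSplit A₀ hA₀e
      have hAbarl : ∀ a ∈ Abar, a < l := by
        intro a ha
        by_contra hcon
        push_neg at hcon
        refine hwit ⟨a, ha, ?_⟩
        intro b hb
        exact le_trans (hle b hb) hcon
      have hlx : l ≤ x := le_of_lt (hA₀x l (by rw [hsplit]; simp))
      have s2 : HC (A₁ ++ (l :: A₂ ++ (rep (R.count x + 1) x ++ (Abar ++ []))))
                 (A₁ ++ (l :: A₂ ++ (Abar ++ (rep (R.count x + 1) x ++ [])))) :=
        (rxlem x l A₂ Abar hA₂ hAbarl hlx (R.count x) []).appL A₁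
      refine hmerge.trans ?_
      refine HC.trans (HC.rfl' (by rw [hsplit]; simp)) (s2.trans (HC.rfl' ?_))
      rw [hm, hfil, hsplit]
      simp

/-- `Dp w b a` : some occurrence of `b` is strictly before some occurrence of `a` in `w`. -/
def Dp {α : Type*} (w : List α) (b a : α) : Prop := ∃ w₁ w₂, w = w₁ ++ b :: w₂ ∧ a ∈ w₂

theorem Dp_nil {α : Type*} (b a : α) : ¬ Dp [] b a := by
  rintro ⟨w₁, w₂, heq, _⟩
  simp at heq

theorem Dp_cons {α : Type*} (c : α) (l : List α) (b a : α) :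
    Dp (c :: l) b a ↔ (c = b ∧ a ∈ l) ∨ Dp l b a := by
  constructor
  · rintro ⟨w₁, w₂, heq, ha⟩
    cases w₁ with
    | nil =>
      injection heq with h1 h2
      exact Or.inl ⟨h1, h2 ▸ ha⟩
    | cons d w₁' =>
      injection heq with h1 h2
      exact Or.inr ⟨w₁', w₂, h2, ha⟩
  · rintro (⟨rfl, ha⟩ | ⟨w₁, w₂, rfl, ha⟩)
    · exact ⟨[], l, rfl, ha⟩
    · exact ⟨c :: w₁, w₂, rfl, ha⟩

theorem Dp_append {α : Type*} (u v : List α) (b a : α) :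
    Dp (u ++ v) b a ↔ Dp u b a ∨ (b ∈ u ∧ a ∈ v) ∨ Dp v b a := by
  induction u with
  | nil => simp [Dp_nil, Dp_cons]
  | cons c u ih =>
    simp only [List.cons_append, Dp_cons, ih, List.mem_append, List.mem_cons]
    tauto

/-- The invariant: equal letter counts, and equal `Dp` for gap-free pairs. -/
def Inv (u v : W) : Prop :=
  (∀ a : Alph, u.count a = v.count a) ∧
  ∀ a b : Alph, a < b → (∀ c ∈ u, ¬(a < c ∧ c < b)) → (Dp u b a ↔ Dp v b a)

theorem mem_iff_of_counts {u v : W} (h : ∀ a : Alph, u.count a = v.count a) (a : Alph) :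
    a ∈ u ↔ a ∈ v := by
  rw [← List.count_pos_iff, ← List.count_pos_iff, h a]

theorem Inv.refl (u : W) : Inv u u := ⟨fun _ => rfl, fun _ _ _ _ => Iff.rfl⟩

theorem Inv.symm {u v : W} (h : Inv u v) : Inv v u := by
  refine ⟨fun a => (h.1 a).symm, ?_⟩
  intro a b hab hnm
  refine (h.2 a b hab ?_).symm
  intro c hc
  exact hnm c ((mem_iff_of_counts h.1 c).1 hc)

theorem Inv.trans {u v w : W} (h1 : Inv u v) (h2 : Inv v w) : Inv u w := by
  refine ⟨fun a => (h1.1 a).trans (h2.1 a), ?_⟩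
  intro a b hab hnm
  refine (h1.2 a b hab hnm).trans (h2.2 a b hab ?_)
  intro c hc
  exact hnm c ((mem_iff_of_counts h1.1 c).2 hc)

theorem Inv.mul {u₁ v₁ u₂ v₂ : W} (h1 : Inv u₁ v₁) (h2 : Inv u₂ v₂) :
    Inv (u₁ ++ u₂) (v₁ ++ v₂) := by
  refine ⟨fun a => by simp [List.count_append, h1.1 a, h2.1 a], ?_⟩
  intro a b hab hnm
  have hnm1 : ∀ c ∈ u₁, ¬(a < c ∧ c < b) := fun c hc => hnm c (by simp [hc])
  have hnm2 : ∀ c ∈ u₂, ¬(a < c ∧ c < b) := fun c hc => hnm c (by simp [hc])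
  rw [Dp_append, Dp_append, h1.2 a b hab hnm1, h2.2 a b hab hnm2,
    mem_iff_of_counts h1.1 b, mem_iff_of_counts h2.1 a]

theorem relInv1 {a b c : Alph} (h1 : a ≤ b) (h2 : b < c) : Inv [a,c,b] [c,a,b] := by
  constructor
  · intro β
    exact List.Perm.count_eq (List.Perm.swap c a [b]) β
  · intro α β hαβ hnm
    have hbm := hnm b (by simp)
    simp only [Dp_cons, Dp_nil, List.mem_cons, List.not_mem_nil, or_false, and_false,
      false_or]
    simp only [← PNat.coe_inj, ← PNat.coe_lt_coe, ← PNat.coe_le_coe] at h1 h2 hαβ hbm ⊢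
    omega

theorem relInv2 {a b c : Alph} (h1 : a < b) (h2 : b ≤ c) : Inv [b,a,c] [b,c,a] := by
  constructor
  · intro β
    exact List.Perm.count_eq (List.Perm.cons b (List.Perm.swap c a [])) β
  · intro α β hαβ hnm
    have hbm := hnm b (by simp)
    simp only [Dp_cons, Dp_nil, List.mem_cons, List.not_mem_nil, or_false, and_false,
      false_or]
    simp only [← PNat.coe_inj, ← PNat.coe_lt_coe, ← PNat.coe_le_coe] at h1 h2 hαβ hbm ⊢
    omega

theorem relInv3 {a b c d : Alph} (h1 : a ≤ b) (h2 : b < c) (h3 : c ≤ d) :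
    Inv [c,a,d,b] [a,c,b,d] := by
  have hperm : List.Perm [c,a,d,b] [a,c,b,d] := by
    refine List.Perm.trans (List.Perm.swap a c [d,b]) ?_
    exact List.Perm.cons a (List.Perm.cons c (List.Perm.swap b d []))
  constructor
  · intro β
    exact List.Perm.count_eq hperm β
  · intro α β hαβ hnm
    have hbm := hnm b (by simp)
    have hcm := hnm c (by simp)
    simp only [Dp_cons, Dp_nil, List.mem_cons, List.not_mem_nil, or_false, and_false,
      false_or]
    simp only [← PNat.coe_inj, ← PNat.coe_lt_coe, ← PNat.coe_le_coe] at h1 h2 h3 hαβ hbm hcm ⊢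
    omega

theorem relInv4 {a b c d : Alph} (h1 : a < b) (h2 : b ≤ c) (h3 : c < d) :
    Inv [b,d,a,c] [d,b,c,a] := by
  have hperm : List.Perm [b,d,a,c] [d,b,c,a] := by
    refine List.Perm.trans (List.Perm.swap d b [a,c]) ?_
    exact List.Perm.cons d (List.Perm.cons b (List.Perm.swap c a []))
  constructor
  · intro β
    exact List.Perm.count_eq hperm β
  · intro α β hαβ hnm
    have hbm := hnm b (by simp)
    have hcm := hnm c (by simp)
    simp only [Dp_cons, Dp_nil, List.mem_cons, List.not_mem_nil, or_false, and_false,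
      false_or]
    simp only [← PNat.coe_inj, ← PNat.coe_lt_coe, ← PNat.coe_le_coe] at h1 h2 h3 hαβ hbm hcm ⊢
    omega

def invCon : Con (FreeMonoid Alph) where
  r u v := Inv (toList u) (toList v)
  iseqv := ⟨fun u => Inv.refl _, Inv.symm, Inv.trans⟩
  mul' := fun h1 h2 => Inv.mul h1 h2

theorem hc_inv {u v : W} (h : HC u v) : Inv u v := by
  have hle : hypoCon ≤ invCon := by
    refine Con.conGen_le.2 ?_
    rintro p q (⟨a,b,c,h1,h2,rfl,rfl⟩ | ⟨a,b,c,h1,h2,rfl,rfl⟩ |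
      ⟨a,b,c,d,h1,h2,h3,rfl,rfl⟩ | ⟨a,b,c,d,h1,h2,h3,rfl,rfl⟩)
    · exact relInv1 h1 h2
    · exact relInv2 h1 h2
    · exact relInv3 h1 h2 h3
    · exact relInv4 h1 h2 h3
  exact hle h

theorem Dp_mem_left {α : Type*} {w : List α} {b a : α} (h : Dp w b a) : b ∈ w := by
  obtain ⟨w₁, w₂, rfl, _⟩ := h
  simp

theorem Dp_mem_right {α : Type*} {w : List α} {b a : α} (h : Dp w b a) : a ∈ w := by
  obtain ⟨w₁, w₂, rfl, ha⟩ := h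
  simp [ha]

theorem Dp_filter {p : Alph → Bool} {b a : Alph} (hb : p b = true) (ha : p a = true) :
    ∀ (w : W), Dp (w.filter p) b a ↔ Dp w b a := by
  intro w
  induction w with
  | nil => simp [Dp_nil]
  | cons c w ih =>
    rw [List.filter_cons]
    by_cases hc : p c = true
    · rw [if_pos hc, Dp_cons, Dp_cons, ih]
      constructor
      · rintro (⟨rfl, hm⟩ | h)
        · exact Or.inl ⟨rfl, (List.mem_filter.1 hm).1⟩
        · exact Or.inr h
      · rintro (⟨rfl, hm⟩ | h)
        · exact Or.inl ⟨rfl, List.mem_filter.2 ⟨hm, ha⟩⟩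
        · exact Or.inr h
    · rw [if_neg hc, ih, Dp_cons]
      constructor
      · exact fun h => Or.inr h
      · rintro (⟨rfl, _⟩ | h)
        · exact absurd hb hc
        · exact h

/-- Sufficiency: words with the same content and the same `Dp` relation are congruent. -/
theorem suff : ∀ (n : ℕ) (u v : W), u.length ≤ n →
    (∀ a : Alph, u.count a = v.count a) →
    (∀ a b : Alph, a < b → (Dp u b a ↔ Dp v b a)) →
    HC u v := by
  intro n
  induction n with
  | zero =>
    intro u v hlen hcnt _
    have hu : u = [] := List.length_eq_zero_iff.1 (Nat.le_zero.1 hlen)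
    subst hu
    have hv : v = [] := by
      refine List.eq_nil_iff_forall_not_mem.2 ?_
      intro a ha
      exact absurd ((mem_iff_of_counts hcnt a).2 ha) (by simp)
    subst hv
    exact HC.refl _
  | succ n ih =>
    intro u v hlen hcnt hD
    by_cases hu : u = []
    · subst hu
      have hv : v = [] := by
        refine List.eq_nil_iff_forall_not_mem.2 ?_
        intro a ha
        exact absurd ((mem_iff_of_counts hcnt a).2 ha) (by simp)
      subst hv
      exact HC.refl _
    · obtain ⟨A₁, x, A₂, husplit, hA₂x, hux⟩ := maxSplit u hu
      have hxu : x ∈ u := by rw [husplit]; simp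
      have hvx : ∀ a ∈ v, a ≤ x := fun a ha => hux a ((mem_iff_of_counts hcnt a).2 ha)
      have hxv : x ∈ v := (mem_iff_of_counts hcnt x).1 hxu
      set m := u.count x with hm
      have hmv : v.count x = m := (hcnt x).symm
      set ubar := u.filter (· ≠ x) with hubar
      set vbar := v.filter (· ≠ x) with hvbar
      have hxnub : x ∉ ubar := by
        rw [hubar]
        intro h
        have := List.of_mem_filter h
        simp at this
      have hxnvb : x ∉ vbar := by
        rw [hvbar]
        intro h
        have := List.of_mem_filter h
        simp at this
      have hbarcnt : ∀ a : Alph, ubar.count a = vbar.count a := by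
        intro a
        by_cases hax : a = x
        · subst hax
          rw [List.count_eq_zero.2 hxnub, List.count_eq_zero.2 hxnvb]
        · rw [hubar, hvbar, List.count_filter (by simp [hax]), List.count_filter (by simp [hax])]
          exact hcnt a
      have hbarD : ∀ a b : Alph, a < b → (Dp ubar b a ↔ Dp vbar b a) := by
        intro a b hab
        by_cases hbx : b = x
        · subst hbx
          constructor
          · intro h; exact absurd (Dp_mem_left h) hxnub
          · intro h; exact absurd (Dp_mem_left h) hxnvb
        · by_cases haxx : a = x
          · subst haxx
            constructor
            · intro h; exact absurd (Dp_mem_right h) hxnub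
            · intro h; exact absurd (Dp_mem_right h) hxnvb
          · rw [hubar, hvbar,
              Dp_filter (by simp [hbx]) (by simp [haxx]) u,
              Dp_filter (by simp [hbx]) (by simp [haxx]) v]
            exact hD a b hab
      have hbarlen : ubar.length ≤ n := by
        have h1 : ubar.length < u.length := by
          rw [hubar]
          refine List.length_filter_lt_length_iff_exists.2 ?_
          exact ⟨x, hxu, by simp⟩
        omega
      by_cases hub : ubar = []
      · -- u and v are powers of x
        have huall : ∀ a ∈ u, a = x := by
          intro a ha
          by_contra hax
          have : a ∈ ubar := by
            rw [hubar]
            refine List.mem_filter.2 ⟨ha, by simpa using hax⟩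
          rw [hub] at this
          cases this
        have hvall : ∀ a ∈ v, a = x := by
          intro a ha
          exact huall a ((mem_iff_of_counts hcnt a).2 ha)
        have hueq : u = List.replicate (u.count x) x := by
          refine (List.eq_replicate_iff.2 ⟨?_, huall⟩)
          exact (List.count_eq_length.2 (fun b hb => (huall b hb).symm)).symm
        have hveq : v = List.replicate (v.count x) x := by
          refine (List.eq_replicate_iff.2 ⟨?_, hvall⟩)
          exact (List.count_eq_length.2 (fun b hb => (hvall b hb).symm)).symm
        refine HC.rfl' ?_
        rw [hueq, hveq, hcnt x]
      · have hvb : vbar ≠ [] := by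
          intro h
          obtain ⟨e, he⟩ := List.exists_mem_of_ne_nil ubar hub
          have hcnt0 : ubar.count e ≠ 0 := by
            intro h0
            exact absurd he (List.count_eq_zero.1 h0)
          rw [hbarcnt e, h] at hcnt0
          simp at hcnt0
        -- l = max of ubar
        obtain ⟨B₁, l, B₂, hbsplit, _, hlub⟩ := maxSplit ubar hub
        have hlmem : l ∈ ubar := by rw [hbsplit]; simp
        have hlx : l < x := by
          rcases lt_or_eq_of_le (hux l (List.mem_of_mem_filter hlmem)) with h | h
          · exact h
          · exact absurd (h ▸ hlmem) hxnub
        -- key fact : normal forms have prescribed Dp at (l, x)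
        have hnfL : ∀ (wb : W), x ∉ wb → l ∈ wb → Dp (rep m x ++ wb) x l := by
          intro wb _ hlwb
          rw [Dp_append]
          refine Or.inr (Or.inl ⟨?_, hlwb⟩)
          have hm1 : m ≠ 0 := by
            intro h0
            exact absurd hxu (List.count_eq_zero.1 (hm ▸ h0))
          simp [rep, List.mem_replicate, hm1]
        have hnfR : ∀ (wb : W), x ∉ wb → ¬ Dp (wb ++ rep m x) x l := by
          intro wb hxwb h
          rw [Dp_append] at h
          rcases h with h | ⟨hx1, _⟩ | h
          · exact absurd (Dp_mem_left h) hxwb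
          · exact absurd hx1 hxwb
          · have := Dp_mem_right h
            rw [rep] at this
            rcases List.eq_of_mem_replicate this with rfl
            exact absurd rfl (ne_of_lt hlx)
        have hnmu : ∀ c ∈ u, ¬(l < c ∧ c < x) := by
          rintro c hc ⟨hlc, hcx⟩
          have hcub : c ∈ ubar := by
            rw [hubar]
            exact List.mem_filter.2 ⟨hc, by simp [ne_of_lt hcx]⟩
          exact absurd (hlub c hcub) (not_le.2 hlc)
        have hnmv : ∀ c ∈ v, ¬(l < c ∧ c < x) :=
          fun c hc => hnmu c ((mem_iff_of_counts hcnt c).2 hc)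
        have hbar : HC ubar vbar := ih ubar vbar hbarlen hbarcnt hbarD
        by_cases hdesc : Dp u x l
        · have hLu : HC u (rep m x ++ ubar) := by
            rcases slemma u x hux hxu with h | h
            · exact h
            · exfalso
              exact hnfR ubar hxnub (((hc_inv h).2 l x hlx hnmu).1 hdesc)
          have hdescv : Dp v x l := (hD l x hlx).1 hdesc
          have hLv : HC v (rep m x ++ vbar) := by
            rcases slemma v x hvx hxv with h | h
            · rw [hmv] at h; exact h
            · exfalso
              rw [hmv] at h
              exact hnfR vbar hxnvb (((hc_inv h).2 l x hlx hnmv).1 hdescv)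
          exact hLu.trans ((hbar.appL (rep m x)).trans hLv.symm)
        · have hRu : HC u (ubar ++ rep m x) := by
            rcases slemma u x hux hxu with h | h
            · exfalso
              exact hdesc ((((hc_inv h).2 l x hlx hnmu)).2 (hnfL ubar hxnub hlmem))
            · exact h
          have hlvb : l ∈ vbar := by
            have h0 : ubar.count l ≠ 0 := fun h0 => absurd hlmem (List.count_eq_zero.1 h0)
            rw [hbarcnt l] at h0
            by_contra hcon
            exact h0 (List.count_eq_zero.2 hcon)
          have hdescv : ¬ Dp v x l := fun h => hdesc ((hD l x hlx).2 h)
          have hRv : HC v (vbar ++ rep m x) := by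
            rcases slemma v x hvx hxv with h | h
            · exfalso
              rw [hmv] at h
              exact hdescv ((((hc_inv h).2 l x hlx hnmv)).2 (hnfL vbar hxnvb hlvb))
            · rw [hmv] at h; exact h
          exact hRu.trans ((hbar.appR (rep m x)).trans hRv.symm)

theorem fin2cases (i : Fin 2) : i = 0 ∨ i = 1 := by
  rcases i with ⟨n, hn⟩
  interval_cases n
  · left; rfl
  · right; rfl

theorem mem_iff_of_counts2 {u v : List (Fin 2)} (h : ∀ i : Fin 2, u.count i = v.count i)
    (i : Fin 2) : i ∈ u ↔ i ∈ v := by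
  rw [← List.count_pos_iff, ← List.count_pos_iff, h i]

def flat (g : Fin 2 → W) (L : List (Fin 2)) : W := (L.map g).flatten

theorem flat_cons (g : Fin 2 → W) (i : Fin 2) (L : List (Fin 2)) :
    flat g (i :: L) = g i ++ flat g L := by simp [flat]

theorem count_flat (g : Fin 2 → W) (a : Alph) :
    ∀ L : List (Fin 2), (flat g L).count a
      = L.count 0 * (g 0).count a + L.count 1 * (g 1).count a := by
  intro L
  induction L with
  | nil => simp [flat]
  | cons i L ih =>
    rw [flat_cons, List.count_append, ih]
    rcases fin2cases i with rfl | rfl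
    · rw [List.count_cons_self, List.count_cons_of_ne (by decide : (0:Fin 2) ≠ 1)]
      ring
    · rw [List.count_cons_of_ne (by decide : (1:Fin 2) ≠ 0), List.count_cons_self]
      ring

theorem mem_flat (g : Fin 2 → W) (a : Alph) :
    ∀ L : List (Fin 2), a ∈ flat g L ↔ ∃ i ∈ L, a ∈ g i := by
  intro L
  induction L with
  | nil => simp [flat]
  | cons i L ih =>
    rw [flat_cons, List.mem_append, ih]
    constructor
    · rintro (h | ⟨j, hj, h⟩)
      · exact ⟨i, by simp, h⟩
      · exact ⟨j, by simp [hj], h⟩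
    · rintro ⟨j, hj, h⟩
      rcases List.mem_cons.1 hj with rfl | hj
      · exact Or.inl h
      · exact Or.inr ⟨j, hj, h⟩

theorem Dp_flat (g : Fin 2 → W) (b a : Alph) :
    ∀ L : List (Fin 2), Dp (flat g L) b a ↔
      (∃ i ∈ L, Dp (g i) b a) ∨ ∃ i j : Fin 2, Dp L i j ∧ b ∈ g i ∧ a ∈ g j := by
  intro L
  induction L with
  | nil =>
    simp only [flat, List.map_nil, List.flatten_nil]
    constructor
    · intro h; exact absurd h (Dp_nil b a)
    · rintro (⟨i, hi, _⟩ | ⟨i, j, hD, _, _⟩)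
      · cases hi
      · exact absurd hD (Dp_nil i j)
  | cons i L ih =>
    rw [flat_cons, Dp_append, ih, mem_flat]
    constructor
    · rintro (h | ⟨hb, ⟨j, hj, haj⟩⟩ | (⟨i', hi', h⟩ | ⟨i', j', hD, hbm, ham⟩))
      · exact Or.inl ⟨i, by simp, h⟩
      · exact Or.inr ⟨i, j, ⟨[], L, rfl, hj⟩, hb, haj⟩
      · exact Or.inl ⟨i', by simp [hi'], h⟩
      · exact Or.inr ⟨i', j', (Dp_cons i L i' j').2 (Or.inr hD), hbm, ham⟩
    · rintro (⟨i', hi', h⟩ | ⟨i', j', hD, hbm, ham⟩)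
      · rcases List.mem_cons.1 hi' with rfl | hi'
        · exact Or.inl h
        · exact Or.inr (Or.inr (Or.inl ⟨i', hi', h⟩))
      · rcases (Dp_cons i L i' j').1 hD with ⟨rfl, hj'⟩ | hD'
        · exact Or.inr (Or.inl ⟨hbm, j', hj', ham⟩)
        · exact Or.inr (Or.inr (Or.inr ⟨i', j', hD', hbm, ham⟩))

theorem Dp_ii : ∀ (L : List (Fin 2)) (i : Fin 2), Dp L i i ↔ 2 ≤ L.count i := by
  intro L
  induction L with
  | nil => intro i; simp [Dp_nil]
  | cons c L ih =>
    intro i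
    rw [Dp_cons, ih]
    by_cases hc : c = i
    · subst hc
      rw [List.count_cons_self]
      have hm := List.count_pos_iff (a := c) (l := L)
      constructor
      · rintro (⟨_, h⟩ | h)
        · have := hm.2 h
          omega
        · omega
      · intro h
        rcases Nat.lt_or_ge (L.count c) 2 with h2 | h2
        · exact Or.inl ⟨rfl, hm.1 (by omega)⟩
        · exact Or.inr h2
    · rw [List.count_cons_of_ne hc]
      constructor
      · rintro (⟨h, _⟩ | h)
        · exact absurd h hc
        · exact h
      · exact fun h => Or.inr h

theorem form01 (L : List (Fin 2)) :
    Dp L 0 1 ∨ ∃ a b : ℕ, L = List.replicate b 1 ++ List.replicate a 0 := by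
  induction L with
  | nil => exact Or.inr ⟨0, 0, rfl⟩
  | cons i L ih =>
    rcases fin2cases i with rfl | rfl
    · by_cases h1 : (1 : Fin 2) ∈ L
      · exact Or.inl ⟨[], L, rfl, h1⟩
      · refine Or.inr ⟨L.length + 1, 0, ?_⟩
        have : L = List.replicate L.length 0 := by
          refine List.eq_replicate_iff.2 ⟨rfl, ?_⟩
          intro b hb
          rcases fin2cases b with rfl | rfl
          · rfl
          · exact absurd hb h1
        rw [List.replicate_succ]
        simpa using this
    · rcases ih with h | ⟨a, b, rfl⟩
      · exact Or.inl ((Dp_cons 1 L 0 1).2 (Or.inr h))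
      · exact Or.inr ⟨a, b+1, by simp [List.replicate_succ]⟩

theorem form10 (L : List (Fin 2)) :
    Dp L 1 0 ∨ ∃ a b : ℕ, L = List.replicate a 0 ++ List.replicate b 1 := by
  induction L with
  | nil => exact Or.inr ⟨0, 0, rfl⟩
  | cons i L ih =>
    rcases fin2cases i with rfl | rfl
    · rcases ih with h | ⟨a, b, rfl⟩
      · exact Or.inl ((Dp_cons 0 L 1 0).2 (Or.inr h))
      · exact Or.inr ⟨a+1, b, by simp [List.replicate_succ]⟩
    · by_cases h1 : (0 : Fin 2) ∈ L
      · exact Or.inl ⟨[], L, rfl, h1⟩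
      · refine Or.inr ⟨0, L.length + 1, ?_⟩
        have : L = List.replicate L.length 1 := by
          refine List.eq_replicate_iff.2 ⟨rfl, ?_⟩
          intro b hb
          rcases fin2cases b with rfl | rfl
          · exact absurd hb h1
          · rfl
        rw [List.replicate_succ]
        simpa using this

theorem nform01 (a b : ℕ) :
    ¬ Dp (List.replicate b (1 : Fin 2) ++ List.replicate a 0) 0 1 := by
  intro h
  rw [Dp_append] at h
  rcases h with h | ⟨h0, _⟩ | h
  · have := List.eq_of_mem_replicate (Dp_mem_left h)
    exact absurd this (by decide)
  · have := List.eq_of_mem_replicate h0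
    exact absurd this (by decide)
  · have := List.eq_of_mem_replicate (Dp_mem_right h)
    exact absurd this (by decide)

theorem nform10 (a b : ℕ) :
    ¬ Dp (List.replicate a (0 : Fin 2) ++ List.replicate b 1) 1 0 := by
  intro h
  rw [Dp_append] at h
  rcases h with h | ⟨h0, _⟩ | h
  · have := List.eq_of_mem_replicate (Dp_mem_left h)
    exact absurd this (by decide)
  · have := List.eq_of_mem_replicate h0
    exact absurd this (by decide)
  · have := List.eq_of_mem_replicate (Dp_mem_right h)
    exact absurd this (by decide)

theorem chainRep (n : ℕ) (p : Alph) : List.Chain' (· ≤ ·) (List.replicate n p) :=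
  List.isChain_replicate_of_rel n le_rfl

theorem chainRepRep {p q : Alph} (hpq : p ≤ q) (a b : ℕ) :
    List.Chain' (· ≤ ·) (List.replicate a p ++ List.replicate b q) := by
  refine List.IsChain.append (chainRep a p) (chainRep b q) ?_
  intro x hx y hy
  have hx' : x = p := List.eq_of_mem_replicate (List.mem_of_mem_getLast? hx)
  have hy' : y = q := List.eq_of_mem_replicate (List.mem_of_mem_head? hy)
  rw [hx', hy']
  exact hpq

def SortedW (w : W) : Prop := List.Chain' (· ≤ ·) w

theorem unsorted_rel {p q : FreeMonoid Alph} (h : HypoRel p q) :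
    ¬SortedW (toList p) ∧ ¬SortedW (toList q) := by
  rcases h with ⟨a,b,c,h1,h2,rfl,rfl⟩ | ⟨a,b,c,h1,h2,rfl,rfl⟩ |
    ⟨a,b,c,d,h1,h2,h3,rfl,rfl⟩ | ⟨a,b,c,d,h1,h2,h3,rfl,rfl⟩ <;>
  constructor <;>
  · intro hS
    simp only [SortedW, toList_mul, toList_of, List.cons_append, List.singleton_append,
      List.nil_append, List.append_assoc, List.Chain', List.isChain_cons_cons, List.isChain_singleton,
      and_true] at hS
    simp only [← PNat.coe_le_coe, ← PNat.coe_lt_coe] at *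
    omega

def sortCon : Con (FreeMonoid Alph) where
  r u v := u = v ∨ (¬SortedW (toList u) ∧ ¬SortedW (toList v))
  iseqv := by
    refine ⟨fun _ => Or.inl rfl, ?_, ?_⟩
    · rintro u v (rfl | ⟨h1, h2⟩)
      · exact Or.inl rfl
      · exact Or.inr ⟨h2, h1⟩
    · rintro u v w (rfl | ⟨h1, h2⟩) (rfl | ⟨h3, h4⟩)
      · exact Or.inl rfl
      · exact Or.inr ⟨h3, h4⟩
      · exact Or.inr ⟨h1, h2⟩
      · exact Or.inr ⟨h1, h4⟩
  mul' := by
    have key : ∀ (s t : W), (¬SortedW s ∨ ¬SortedW t) → ¬SortedW (s ++ t) := by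
      rintro s t (h | h) hS
      · exact h (List.isChain_append.1 hS).1
      · exact h (List.isChain_append.1 hS).2.1
    rintro w x y z (rfl | ⟨h1, h2⟩) (rfl | ⟨h3, h4⟩)
    · exact Or.inl rfl
    · exact Or.inr ⟨key _ _ (Or.inr h3), key _ _ (Or.inr h4)⟩
    · exact Or.inr ⟨key _ _ (Or.inl h1), key _ _ (Or.inl h2)⟩
    · exact Or.inr ⟨key _ _ (Or.inl h1), key _ _ (Or.inl h2)⟩

theorem hc_sorted_eq {u v : W} (h : HC u v) (hs : SortedW u) : u = v := by
  have hle : hypoCon ≤ sortCon := Con.conGen_le.2 (fun p q hr => Or.inr (unsorted_rel hr))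
  rcases hle h with heq | ⟨hns, _⟩
  · exact congrArg toList heq
  · exact absurd hs hns

def subst (w₁ w₂ : FreeMonoid Alph) : FreeMonoid (Fin 2) →* FreeMonoid Alph :=
  lift (fun i => if i = 0 then w₁ else w₂)

theorem toList_subst (w₁ w₂ : FreeMonoid Alph) (u : FreeMonoid (Fin 2)) :
    toList (subst w₁ w₂ u) =
      flat (fun i => if i = 0 then toList w₁ else toList w₂) (toList u) := by
  rw [subst, lift_apply, flat, toList_prod, List.map_map]
  congr 1

theorem psi_repr (ψ : FreeMonoid (Fin 2) →* Hypo) :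
    ∃ w₁ w₂ : FreeMonoid Alph, ψ = (hypoCon.mk').comp (subst w₁ w₂) := by
  obtain ⟨w₁, h₁⟩ := Con.mk'_surjective (c := hypoCon) (ψ (of 0))
  obtain ⟨w₂, h₂⟩ := Con.mk'_surjective (c := hypoCon) (ψ (of 1))
  refine ⟨w₁, w₂, (FreeMonoid.hom_eq ?_).symm⟩
  intro i
  rcases fin2cases i with rfl | rfl
  · show hypoCon.mk' (subst w₁ w₂ (of 0)) = ψ (of 0)
    rw [subst, lift_eval_of]
    simpa using h₁
  · show hypoCon.mk' (subst w₁ w₂ (of 1)) = ψ (of 1)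
    rw [subst, lift_eval_of]
    simpa using h₂

theorem mk'_eq_iff {a b : FreeMonoid Alph} :
    hypoCon.mk' a = hypoCon.mk' b ↔ hypoCon a b := by
  change ((a : Hypo) = (b : Hypo)) ↔ _
  exact Con.eq hypoCon

theorem msat_iff (u v : FreeMonoid (Fin 2)) :
    MSatisfies Hypo u v ↔
      ∀ w₁ w₂ : FreeMonoid Alph, hypoCon (subst w₁ w₂ u) (subst w₁ w₂ v) := by
  constructor
  · intro h w₁ w₂
    have := h ((hypoCon.mk').comp (subst w₁ w₂))
    rw [MonoidHom.comp_apply, MonoidHom.comp_apply] at this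
    exact mk'_eq_iff.1 this
  · intro h ψ
    obtain ⟨w₁, w₂, rfl⟩ := psi_repr ψ
    rw [MonoidHom.comp_apply, MonoidHom.comp_apply]
    exact mk'_eq_iff.2 (h w₁ w₂)

theorem toList_of_pow {α : Type*} (x : α) (n : ℕ) :
    toList ((of x) ^ n : FreeMonoid α) = List.replicate n x := by
  induction n with
  | zero => rfl
  | succ n ih =>
    rw [pow_succ, toList_mul, ih, toList_of, List.replicate_succ']

theorem flat_single (h : Fin 2 → Alph) :
    ∀ L, flat (fun i => [h i]) L = L.map h := by
  intro L
  induction L with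
  | nil => rfl
  | cons i L ih => rw [flat_cons, ih]; rfl

/-- Rigidity: if the substituted image of `u` is sorted, then `u = v`. -/
theorem rigid {u v : FreeMonoid (Fin 2)} (q0 q1 : Alph) (hq : q0 ≠ q1)
    (hcc : hypoCon (subst (of q0) (of q1) u) (subst (of q0) (of q1) v))
    (hsort : SortedW (flat (fun i => [if i = 0 then q0 else q1]) (toList u))) :
    u = v := by
  have e0 : (fun i : Fin 2 => if i = 0 then toList (of q0) else toList (of q1))
      = (fun i : Fin 2 => [if i = 0 then q0 else q1]) := by
    funext i
    by_cases hi : i = 0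
    · rw [if_pos hi, toList_of, if_pos hi]
    · rw [if_neg hi, toList_of, if_neg hi]
  have e1 : ∀ w : FreeMonoid (Fin 2),
      ofList (flat (fun i => [if i = 0 then q0 else q1]) (toList w)) = subst (of q0) (of q1) w := by
    intro w
    rw [← e0, ← toList_subst, ofList_toList]
  have hHC : HC (flat (fun i => [if i = 0 then q0 else q1]) (toList u))
      (flat (fun i => [if i = 0 then q0 else q1]) (toList v)) := by
    show hypoCon _ _
    rw [e1 u, e1 v]
    exact hcc
  have heq := hc_sorted_eq hHC hsort
  rw [flat_single, flat_single] at heq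
  have hinj : Function.Injective (fun i : Fin 2 => if i = 0 then q0 else q1) := by
    intro i j hij
    rcases fin2cases i with rfl | rfl <;> rcases fin2cases j with rfl | rfl <;>
      simp at hij ⊢ <;> first | rfl | exact absurd hij hq | exact absurd hij.symm hq
  have : toList u = toList v := List.map_injective_iff.2 hinj heq
  exact this

theorem flat_map_eq (h : Fin 2 → Alph) (L : List (Fin 2)) :
    flat (fun i => [h i]) L = L.map h := flat_single h L

end HP

open HP

/-- A nontrivial identity `u ≈ v` over the two-letter alphabet of variables
`{x, y}` (here `x = 0` and `y = 1` in `Fin 2`) is satisfied by `hypo` if and only if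
it is balanced and neither side is of the form `x^a y^b` or `y^b x^a`. -/
theorem hypo_two_variable_identities (u v : FreeMonoid (Fin 2)) (huv : u ≠ v) :
    MSatisfies Hypo u v ↔
      (IsBalanced u v ∧
        (∀ a b : ℕ, u ≠ of 0 ^ a * of 1 ^ b ∧ u ≠ of 1 ^ b * of 0 ^ a) ∧
        (∀ a b : ℕ, v ≠ of 0 ^ a * of 1 ^ b ∧ v ≠ of 1 ^ b * of 0 ^ a)) := by
  have hp12 : (1 : Alph) ≠ 2 := by decide
  have hp12le : (1 : Alph) ≤ 2 := by decide
  constructor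
  · intro hsat
    have hcc := (msat_iff u v).1 hsat
    -- balancedness
    have hbal : IsBalanced u v := by
      have hInv : Inv (toList (subst (of 1) (of 2) u)) (toList (subst (of 1) (of 2) v)) := by
        refine hc_inv ?_
        show hypoCon (ofList (toList _)) (ofList (toList _))
        rw [ofList_toList, ofList_toList]
        exact hcc (of 1) (of 2)
      have k1 := hInv.1 1
      have k2 := hInv.1 2
      rw [toList_subst, toList_subst, count_flat, count_flat] at k1 k2
      simp only [if_pos rfl, eq_self_iff_true, if_true, if_neg (by decide : ¬(1 : Fin 2) = 0), toList_of] at k1 k2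
      have c11 : ([1] : W).count 1 = 1 := by simp
      have c21 : ([2] : W).count 1 = 0 := by simp [hp12.symm]
      have c12 : ([1] : W).count 2 = 0 := by simp [hp12]
      have c22 : ([2] : W).count 2 = 1 := by simp
      rw [c11, c21] at k1
      rw [c12, c22] at k2
      intro i
      rcases fin2cases i with rfl | rfl
      · omega
      · omega
    refine ⟨hbal, ?_, ?_⟩
    · intro a b
      constructor
      · intro hform
        refine huv (rigid 1 2 hp12 (hcc (of 1) (of 2)) ?_)
        have hUL : toList u = List.replicate a (0 : Fin 2) ++ List.replicate b 1 := by
          rw [hform, toList_mul, toList_of_pow, toList_of_pow]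
        rw [flat_map_eq, hUL, List.map_append, List.map_replicate, List.map_replicate]
        simp only [if_pos rfl, eq_self_iff_true, if_true, if_neg (by decide : ¬(1 : Fin 2) = 0)]
        exact chainRepRep hp12le a b
      · intro hform
        refine huv (rigid 2 1 hp12.symm (hcc (of 2) (of 1)) ?_)
        have hUL : toList u = List.replicate b (1 : Fin 2) ++ List.replicate a 0 := by
          rw [hform, toList_mul, toList_of_pow, toList_of_pow]
        rw [flat_map_eq, hUL, List.map_append, List.map_replicate, List.map_replicate]
        simp only [if_pos rfl, eq_self_iff_true, if_true, if_neg (by decide : ¬(1 : Fin 2) = 0)]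
        exact chainRepRep hp12le b a
    · intro a b
      constructor
      · intro hform
        refine huv (rigid 1 2 hp12 (hypoCon.symm (hcc (of 1) (of 2))) ?_).symm
        have hVL : toList v = List.replicate a (0 : Fin 2) ++ List.replicate b 1 := by
          rw [hform, toList_mul, toList_of_pow, toList_of_pow]
        rw [flat_map_eq, hVL, List.map_append, List.map_replicate, List.map_replicate]
        simp only [if_pos rfl, eq_self_iff_true, if_true, if_neg (by decide : ¬(1 : Fin 2) = 0)]
        exact chainRepRep hp12le a b
      · intro hform
        refine huv (rigid 2 1 hp12.symm (hypoCon.symm (hcc (of 2) (of 1))) ?_).symm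
        have hVL : toList v = List.replicate b (1 : Fin 2) ++ List.replicate a 0 := by
          rw [hform, toList_mul, toList_of_pow, toList_of_pow]
        rw [flat_map_eq, hVL, List.map_append, List.map_replicate, List.map_replicate]
        simp only [if_pos rfl, eq_self_iff_true, if_true, if_neg (by decide : ¬(1 : Fin 2) = 0)]
        exact chainRepRep hp12le b a
  · rintro ⟨hbal, hu, hv⟩
    refine (msat_iff u v).2 ?_
    intro w₁ w₂
    have hcnt2 : ∀ i : Fin 2, (toList u).count i = (toList v).count i := hbal
    have hmem2 := mem_iff_of_counts2 hcnt2
    have hDij : ∀ i j : Fin 2, Dp (toList u) i j ↔ Dp (toList v) i j := by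
      have hform : ∀ (w : FreeMonoid (Fin 2)),
          (∀ a b : ℕ, w ≠ of 0 ^ a * of 1 ^ b ∧ w ≠ of 1 ^ b * of 0 ^ a) →
          Dp (toList w) 0 1 ∧ Dp (toList w) 1 0 := by
        intro w hw
        constructor
        · rcases form01 (toList w) with h | ⟨a, b, hform⟩
          · exact h
          · exfalso
            refine (hw a b).2 (toList.injective ?_)
            rw [hform, toList_mul, toList_of_pow, toList_of_pow]
        · rcases form10 (toList w) with h | ⟨a, b, hform⟩
          · exact h
          · exfalso
            refine (hw a b).1 (toList.injective ?_)
            rw [hform, toList_mul, toList_of_pow, toList_of_pow]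
      intro i j
      rcases fin2cases i with rfl | rfl <;> rcases fin2cases j with rfl | rfl
      · rw [Dp_ii, Dp_ii, hcnt2 0]
      · exact iff_of_true (hform u hu).1 (hform v hv).1
      · exact iff_of_true (hform u hu).2 (hform v hv).2
      · rw [Dp_ii, Dp_ii, hcnt2 1]
    have key : HC (flat (fun i => if i = 0 then toList w₁ else toList w₂) (toList u))
        (flat (fun i => if i = 0 then toList w₁ else toList w₂) (toList v)) := by
      refine suff (flat (fun i => if i = 0 then toList w₁ else toList w₂) (toList u)).length
        _ _ le_rfl ?_ ?_
      · intro a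
        rw [count_flat, count_flat, hcnt2 0, hcnt2 1]
      · intro a b _
        rw [Dp_flat, Dp_flat]
        constructor
        · rintro (⟨i, hi, h⟩ | ⟨i, j, hD, hb, ha⟩)
          · exact Or.inl ⟨i, (hmem2 i).1 hi, h⟩
          · exact Or.inr ⟨i, j, (hDij i j).1 hD, hb, ha⟩
        · rintro (⟨i, hi, h⟩ | ⟨i, j, hD, hb, ha⟩)
          · exact Or.inl ⟨i, (hmem2 i).2 hi, h⟩
          · exact Or.inr ⟨i, j, (hDij i j).2 hD, hb, ha⟩
    have := key
    show hypoCon _ _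
    rw [show subst w₁ w₂ u = ofList (flat (fun i => if i = 0 then toList w₁ else toList w₂) (toList u)) from by rw [← toList_subst, ofList_toList],
       show subst w₁ w₂ v = ofList (flat (fun i => if i = 0 then toList w₁ else toList w₂) (toList v)) from by rw [← toList_subst, ofList_toList]]
    exact this
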